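/- Let X = (x₁, …, x_n) be a string over an alphabet 𝒜 in which every symbol differs from the preceding one (x_j ≠ x_{j+1} for all 1 ≤ j < n). For a set S of positions, let X∖S denote the string obtained by deleting the positions in S. If S and S' are two distinct sets of k positions each containing no two adjacent positions (no j with both j and j+1 in the set), then X∖S ≠ X∖S'. Consequently, the number of distinct subsequences of X of length n − k is at least C(n−k, k). -/

import Mathlib

/-- `deleteIndices X S` is the string obtained from `X` by deleting the symbols
whose positions lie in `S`. -/
def deleteIndices {α : Type*} (X : List α) (S : Finset ℕ) : List α :=
  (X.zipIdx.filter (fun p => p.2 ∉ S)).map Prod.fst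

namespace DelAux

/-- the list of kept indices -/
def keepList (n : ℕ) (S : Finset ℕ) : List ℕ :=
  (List.range n).filter (fun i => i ∉ S)

lemma map_fst_filter {α : Type*} (X : List α) (S : Finset ℕ) :
    (X.zipIdx.filter (fun p => p.2 ∉ S)).map Prod.snd = keepList X.length S := by
  rw [keepList, List.range_eq_range', ← List.zipIdx_map_snd 0 X, List.filter_map]
  rfl

lemma length_del {α : Type*} (X : List α) (S : Finset ℕ) :
    (deleteIndices X S).length = (keepList X.length S).length := by
  rw [deleteIndices, List.length_map, ← map_fst_filter, List.length_map]

lemma mem_keepList {n i : ℕ} {S : Finset ℕ} :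
    i ∈ keepList n S ↔ i < n ∧ i ∉ S := by
  simp [keepList, List.mem_filter]

lemma keepList_sorted (n : ℕ) (S : Finset ℕ) :
    (keepList n S).Pairwise (· < ·) :=
  List.pairwise_lt_range.filter _

lemma keepList_nodup (n : ℕ) (S : Finset ℕ) : (keepList n S).Nodup :=
  List.nodup_range.filter _

lemma keepList_toFinset (n : ℕ) (S : Finset ℕ) :
    (keepList n S).toFinset = Finset.range n \ S := by
  ext i
  simp [mem_keepList, Finset.mem_sdiff, and_comm]

lemma keepList_length (n : ℕ) (S : Finset ℕ) (hS : S ⊆ Finset.range n) :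
    (keepList n S).length = n - S.card := by
  classical
  rw [← List.toFinset_card_of_nodup (keepList_nodup n S), keepList_toFinset,
    Finset.card_sdiff_of_subset hS, Finset.card_range]

lemma rep {α : Type*} (X : List α) (S : Finset ℕ) (m : ℕ)
    (hm : m < (deleteIndices X S).length)
    (hm' : m < (keepList X.length S).length)
    (hx : (keepList X.length S)[m] < X.length) :
    (deleteIndices X S)[m] = X[(keepList X.length S)[m]] := by
  set F := X.zipIdx.filter (fun p => p.2 ∉ S)
  have hdel : deleteIndices X S = F.map Prod.fst := rfl
  have hmF : m < F.length := by
    rw [hdel, List.length_map] at hm; exact hm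
  have h1 : (deleteIndices X S)[m] = (F[m]).1 := by
    rw [List.getElem_of_eq hdel hm, List.getElem_map]
  have h2 : (keepList X.length S)[m] = (F[m]).2 := by
    rw [List.getElem_of_eq (map_fst_filter X S).symm hm', List.getElem_map]
  have hmem : F[m] ∈ X.zipIdx := List.mem_of_mem_filter (List.getElem_mem hmF)
  have h3 : X[(F[m]).2]? = some (F[m]).1 := List.mem_zipIdx_iff_getElem?.mp hmem
  rw [← h2, List.getElem?_eq_getElem hx] at h3
  rw [h1]
  exact (Option.some_inj.mp h3).symm

end DelAux

lemma DelAux.core {α : Type*} {X : List α} (hX : X.Chain' (· ≠ ·)) {S S' : Finset ℕ}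
    (hS' : S' ⊆ Finset.range X.length)
    (hna' : ∀ j, ¬(j ∈ S' ∧ j + 1 ∈ S'))
    (heq : deleteIndices X S = deleteIndices X S')
    {m : ℕ} (hm : m < (keepList X.length S).length)
    (hm' : m < (keepList X.length S').length)
    (hagree : ∀ t (htm : t < m) (h : t < (keepList X.length S).length)
      (h' : t < (keepList X.length S').length),
      (keepList X.length S)[t] = (keepList X.length S')[t])
    (hlt : (keepList X.length S)[m] < (keepList X.length S')[m]) : False := by
  set n := X.length with hn
  set L := keepList n S with hL
  set L' := keepList n S' with hL'
  set i := L[m] with hi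
  set i' := L'[m] with hi'
  have hsorted : L.Pairwise (· < ·) := keepList_sorted n S
  have hsorted' : L'.Pairwise (· < ·) := keepList_sorted n S'
  have hpw := List.pairwise_iff_getElem.mp hsorted
  have hpw' := List.pairwise_iff_getElem.mp hsorted'
  have hin : i < n := (mem_keepList.mp (List.getElem_mem hm)).1
  have hi'n : i' < n := (mem_keepList.mp (List.getElem_mem hm')).1
  -- i ∈ S'
  have hiS' : i ∈ S' := by
    by_contra hcon
    have hiL' : i ∈ L' := mem_keepList.mpr ⟨hin, hcon⟩
    obtain ⟨t, ht, hti⟩ := List.mem_iff_getElem.mp hiL'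
    rcases lt_trichotomy t m with h | h | h
    · have := hagree t h (h.trans hm) ht
      have h2 : L[t] < L[m] := hpw t m (h.trans hm) hm h
      rw [this, hti] at h2
      exact lt_irrefl _ h2
    · subst h
      have h2 : i' = i := hi'.trans hti
      omega
    · have h2 : L'[m] < L'[t] := hpw' m t hm' ht h
      rw [hti] at h2
      omega
  -- i' = i + 1
  have hi1 : i + 1 ∉ S' := fun h => hna' i ⟨hiS', h⟩
  have hi1n : i + 1 < n := by omega
  have hi1L' : i + 1 ∈ L' := mem_keepList.mpr ⟨hi1n, hi1⟩
  obtain ⟨t, ht, hti⟩ := List.mem_iff_getElem.mp hi1L'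
  have heqi' : i' = i + 1 := by
    rcases lt_trichotomy t m with h | h | h
    · have := hagree t h (h.trans hm) ht
      have h2 : L[t] < L[m] := hpw t m (h.trans hm) hm h
      rw [this, hti] at h2
      omega
    · subst h; exact hi'.trans hti
    · have h2 : L'[m] < L'[t] := hpw' m t hm' ht h
      rw [hti] at h2
      omega
  -- symbols agree, contradiction with chain'
  have hmd : m < (deleteIndices X S).length := by rw [length_del]; exact hm
  have hmd' : m < (deleteIndices X S').length := by rw [length_del]; exact hm'
  have e1 : (deleteIndices X S)[m] = X[i] := rep X S m hmd hm hin
  have e2 : (deleteIndices X S')[m] = X[i'] := rep X S' m hmd' hm' hi'n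
  have e3 : (deleteIndices X S)[m] = (deleteIndices X S')[m] :=
    List.getElem_of_eq heq hmd
  have hne := List.isChain_iff_getElem.mp hX i (by omega)
  apply hne
  have key : ∀ (a b : ℕ) (hab : a = b) (ha : a < X.length),
      X[a] = X[b]'(hab ▸ ha) := by rintro a b rfl ha; rfl
  have : X[i] = X[i'] := by rw [← e1, ← e2, e3]
  rw [this]
  exact key i' (i+1) heqi' hi'n

lemma DelAux.part1 {α : Type*} {X : List α} (hX : X.Chain' (· ≠ ·)) {k : ℕ}
    {S S' : Finset ℕ} (hS : S ⊆ Finset.range X.length) (hS' : S' ⊆ Finset.range X.length)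
    (hkS : S.card = k) (hkS' : S'.card = k)
    (hna : ∀ j, ¬(j ∈ S ∧ j + 1 ∈ S)) (hna' : ∀ j, ¬(j ∈ S' ∧ j + 1 ∈ S'))
    (hne : S ≠ S') (heq : deleteIndices X S = deleteIndices X S') : False := by
  classical
  set n := X.length with hn
  set L := keepList n S with hL
  set L' := keepList n S' with hL'
  have hlen : L.length = L'.length := by
    rw [hL, hL', keepList_length n S hS, keepList_length n S' hS', hkS, hkS']
  have hLne : L ≠ L' := by
    intro hcon
    apply hne
    have h1 : Finset.range n \ S = Finset.range n \ S' := by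
      rw [← keepList_toFinset n S, ← keepList_toFinset n S', ← hL, ← hL', hcon]
    have := congrArg (fun t => Finset.range n \ t) h1
    simpa [Finset.sdiff_sdiff_eq_self hS, Finset.sdiff_sdiff_eq_self hS'] using this
  have hex : ∃ m, ∃ (h : m < L.length) (h' : m < L'.length), L[m] ≠ L'[m] := by
    by_contra hcon
    push_neg at hcon
    exact hLne (List.ext_getElem hlen (fun t h h' => hcon t h h'))
  set m := Nat.find hex with hm
  obtain ⟨hmL, hmL', hmne⟩ := Nat.find_spec hex
  have hagree : ∀ t, t < m → ∀ (h : t < L.length) (h' : t < L'.length), L[t] = L'[t] := by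
    intro t htm h h'
    have := Nat.find_min hex htm
    push_neg at this
    exact this h h'
  rcases lt_trichotomy L[m] L'[m] with h | h | h
  · exact DelAux.core hX hS' hna' heq hmL hmL' hagree h
  · exact hmne h
  · exact DelAux.core hX hS hna heq.symm hmL' hmL
      (fun t ht h h' => (hagree t ht h' h).symm) h

namespace DelAux

lemma del_sublist {α : Type*} (X : List α) (S : Finset ℕ) :
    (deleteIndices X S).Sublist X := by
  have h := (List.filter_sublist (l := X.zipIdx) (p := fun p => p.2 ∉ S)).map Prod.fst
  rwa [List.zipIdx_map_fst] at h

lemma del_length {α : Type*} (X : List α) (S : Finset ℕ)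
    (hS : S ⊆ Finset.range X.length) :
    (deleteIndices X S).length = X.length - S.card := by
  rw [length_del, keepList_length _ _ hS]

def shiftSet (k : ℕ) (A : Finset ℕ) (hA : A.card = k) : Finset ℕ :=
  Finset.image (fun i : Fin k => A.orderEmbOfFin hA i + i) Finset.univ

lemma shift_strictMono (k : ℕ) (A : Finset ℕ) (hA : A.card = k) :
    StrictMono (fun i : Fin k => A.orderEmbOfFin hA i + (i : ℕ)) := by
  intro i j hij
  have h1 : A.orderEmbOfFin hA i < A.orderEmbOfFin hA j :=
    (A.orderEmbOfFin hA).strictMono hij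
  have h2 : (i : ℕ) < j := hij
  simpa using Nat.add_lt_add h1 h2

lemma shiftSet_card (k : ℕ) (A : Finset ℕ) (hA : A.card = k) :
    (shiftSet k A hA).card = k := by
  rw [shiftSet, Finset.card_image_of_injective _ (shift_strictMono k A hA).injective,
    Finset.card_univ, Fintype.card_fin]

lemma mem_shiftSet {k : ℕ} {A : Finset ℕ} {hA : A.card = k} {x : ℕ} :
    x ∈ shiftSet k A hA ↔ ∃ i : Fin k, A.orderEmbOfFin hA i + (i : ℕ) = x := by
  simp [shiftSet]

lemma shiftSet_subset {n k : ℕ} {A : Finset ℕ} (hA : A.card = k)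
    (hA' : A ⊆ Finset.range (n - k)) : shiftSet k A hA ⊆ Finset.range n := by
  intro x hx
  obtain ⟨i, hi⟩ := mem_shiftSet.mp hx
  have h1 : A.orderEmbOfFin hA i ∈ A := A.orderEmbOfFin_mem hA i
  have h2 : A.orderEmbOfFin hA i < n - k := Finset.mem_range.mp (hA' h1)
  have h3 : (i : ℕ) < k := i.isLt
  have h4 : k ≤ n - k := by
    have := Finset.card_le_card hA'
    rwa [hA, Finset.card_range] at this
  rw [Finset.mem_range, ← hi]
  omega

lemma shiftSet_nonadj {k : ℕ} {A : Finset ℕ} (hA : A.card = k) :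
    ∀ j, ¬(j ∈ shiftSet k A hA ∧ j + 1 ∈ shiftSet k A hA) := by
  rintro j ⟨h1, h2⟩
  obtain ⟨a, ha⟩ := mem_shiftSet.mp h1
  obtain ⟨b, hb⟩ := mem_shiftSet.mp h2
  rcases le_or_gt b a with h | h
  · have e1 : A.orderEmbOfFin hA b ≤ A.orderEmbOfFin hA a :=
      (A.orderEmbOfFin hA).monotone h
    have e2 : (b : ℕ) ≤ a := h
    omega
  · have e1 : A.orderEmbOfFin hA a < A.orderEmbOfFin hA b :=
      (A.orderEmbOfFin hA).strictMono h
    have e2 : (a : ℕ) < b := h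
    omega

lemma shiftSet_inj {k : ℕ} {A B : Finset ℕ} (hA : A.card = k) (hB : B.card = k)
    (h : shiftSet k A hA = shiftSet k B hB) : A = B := by
  have hcA : (shiftSet k A hA).card = k := shiftSet_card k A hA
  have e1 : (fun i : Fin k => A.orderEmbOfFin hA i + (i : ℕ)) =
      ⇑((shiftSet k A hA).orderEmbOfFin hcA) :=
    Finset.orderEmbOfFin_unique hcA
      (fun i => mem_shiftSet.mpr ⟨i, rfl⟩) (shift_strictMono k A hA)
  have hcB : (shiftSet k B hB).card = k := shiftSet_card k B hB
  have e2' : (fun i : Fin k => B.orderEmbOfFin hB i + (i : ℕ)) =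
      ⇑((shiftSet k B hB).orderEmbOfFin hcB) :=
    Finset.orderEmbOfFin_unique hcB
      (fun i => mem_shiftSet.mpr ⟨i, rfl⟩) (shift_strictMono k B hB)
  have key : ∀ (s t : Finset ℕ) (hs : s.card = k) (ht : t.card = k), s = t →
      ∀ i : Fin k, s.orderEmbOfFin hs i = t.orderEmbOfFin ht i := by
    rintro s t hs ht rfl i; rfl
  have e2 : (fun i : Fin k => B.orderEmbOfFin hB i + (i : ℕ)) =
      ⇑((shiftSet k A hA).orderEmbOfFin hcA) := by
    rw [e2']
    exact funext fun i => (key _ _ hcB hcA h.symm i)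
  have e3 : ∀ i : Fin k, A.orderEmbOfFin hA i = B.orderEmbOfFin hB i := by
    intro i
    have := congrFun (e1.trans e2.symm) i
    simpa using this
  have : ⇑(A.orderEmbOfFin hA) = ⇑(B.orderEmbOfFin hB) := funext e3
  have hr : (A : Set ℕ) = (B : Set ℕ) := by
    rw [← Finset.range_orderEmbOfFin A hA, ← Finset.range_orderEmbOfFin B hB, this]
  exact Finset.coe_injective hr

end DelAux

/-- For a string `X` in which every symbol differs from the preceding one,
distinct sets of `k` pairwise non-adjacent deletion positions yield distinct
strings; consequently `X` has at least `C(n−k, k)` distinct subsequences of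
length `n − k`, where `n = |X|`. -/
theorem distinct_nonadjacent_deletions {α : Type*} {X : List α}
    (hX : X.Chain' (· ≠ ·)) (k : ℕ) :
    (∀ S S' : Finset ℕ, S ⊆ Finset.range X.length → S' ⊆ Finset.range X.length →
      S.card = k → S'.card = k →
      (∀ j, ¬(j ∈ S ∧ j + 1 ∈ S)) → (∀ j, ¬(j ∈ S' ∧ j + 1 ∈ S')) →
      S ≠ S' → deleteIndices X S ≠ deleteIndices X S') ∧
    Nat.card {Z : List α // Z.Sublist X ∧ Z.length = X.length - k} ≥
      (X.length - k).choose k := by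
  classical
  constructor
  · intro S S' hS hS' hkS hkS' hna hna' hne heq
    exact DelAux.part1 hX hS hS' hkS hkS' hna hna' hne heq
  · set n := X.length with hn
    have hfin : Finite {Z : List α // Z.Sublist X ∧ Z.length = n - k} := by
      have hsub : {Z : List α | Z.Sublist X ∧ Z.length = n - k} ⊆
          ↑X.sublists.toFinset := by
        intro Z hZ
        simp only [Finset.coe_sort_coe, List.coe_toFinset, Set.mem_setOf_eq,
          List.mem_sublists]
        exact hZ.1
      exact ((X.sublists.toFinset.finite_toSet).subset hsub).to_subtype
    set T := Finset.powersetCard k (Finset.range (n - k)) with hT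
    have hcardA : ∀ A : {A // A ∈ T}, (A.1).card = k :=
      fun A => (Finset.mem_powersetCard.mp A.2).2
    have hsubA : ∀ A : {A // A ∈ T}, A.1 ⊆ Finset.range (n - k) :=
      fun A => (Finset.mem_powersetCard.mp A.2).1
    have hSsub : ∀ A : {A // A ∈ T},
        DelAux.shiftSet k A.1 (hcardA A) ⊆ Finset.range n :=
      fun A => DelAux.shiftSet_subset (hcardA A) (hsubA A)
    let φ : {A // A ∈ T} → {Z : List α // Z.Sublist X ∧ Z.length = n - k} :=
      fun A => ⟨deleteIndices X (DelAux.shiftSet k A.1 (hcardA A)),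
        DelAux.del_sublist X _, by
          rw [DelAux.del_length X _ (hSsub A), DelAux.shiftSet_card]⟩
    have hφ : Function.Injective φ := by
      intro A B h
      have heq : deleteIndices X (DelAux.shiftSet k A.1 (hcardA A)) =
          deleteIndices X (DelAux.shiftSet k B.1 (hcardA B)) :=
        congrArg Subtype.val h
      by_contra hne
      have hne' : A.1 ≠ B.1 := fun hc => hne (Subtype.ext hc)
      have hsne : DelAux.shiftSet k A.1 (hcardA A) ≠
          DelAux.shiftSet k B.1 (hcardA B) :=
        fun hc => hne' (DelAux.shiftSet_inj _ _ hc)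
      exact DelAux.part1 hX (hSsub A) (hSsub B)
        (DelAux.shiftSet_card k _ _) (DelAux.shiftSet_card k _ _)
        (DelAux.shiftSet_nonadj _) (DelAux.shiftSet_nonadj _) hsne heq
    have h1 : Nat.card {A // A ∈ T} = (n - k).choose k := by
      rw [Nat.card_eq_finsetCard, hT, Finset.card_powersetCard, Finset.card_range]
    calc (n - k).choose k = Nat.card {A // A ∈ T} := h1.symm
      _ ≤ Nat.card {Z : List α // Z.Sublist X ∧ Z.length = n - k} :=
        Nat.card_le_card_of_injective φ hφ
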